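/- For every quiver X, the free category F_X freely generated by X (the path category of X) is residually finite. -/

import Mathlib

open CategoryTheory

/-- A category is residually finite if any two distinct parallel morphisms
can be separated by a functor to a finite category. -/
def ResiduallyFiniteCat (C : Type*) [Category C] : Prop :=
  ∀ {X Y : C} (f g : X ⟶ Y), f ≠ g →
    ∃ (D : Type) (_ : SmallCategory D) (_ : FinCategory D) (F : C ⥤ D),
      F.map f ≠ F.map g

namespace RFAux

variable {V : Type*} [Quiver V]

/-- The list of edges of a path, in order. -/
def edgeList {X Y : V} (p : Quiver.Path X Y) : List (Σ a b : V, a ⟶ b) :=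
  Quiver.Path.rec (motive := fun Z _ => List (Σ a b : V, a ⟶ b)) []
    (fun {b c} _ (e : b ⟶ c) ih => ih ++ [⟨b, c, e⟩]) p

@[simp] theorem edgeList_nil {X : V} :
    edgeList (Quiver.Path.nil (a := X)) = [] := rfl

@[simp] theorem edgeList_cons {X b c : V} (p : Quiver.Path X b) (e : b ⟶ c) :
    edgeList (p.cons e) = edgeList p ++ [⟨b, c, e⟩] := rfl

theorem edgeList_inj : ∀ {X Y : V} (p q : Quiver.Path X Y),
    edgeList p = edgeList q → p = q := by
  intro X Y p
  induction p with
  | nil =>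
    intro q h
    cases q with
    | nil => rfl
    | cons q e => simp at h
  | cons p e ih =>
    intro q h
    cases q with
    | nil => simp at h
    | cons q e' =>
      simp only [edgeList_cons] at h
      have h' := congrArg List.reverse h
      simp only [List.reverse_append, List.reverse_singleton, List.singleton_append,
        List.cons.injEq] at h'
      obtain ⟨h1, h2⟩ := h'
      injection h1 with hb hrest
      subst hb
      have h3 := eq_of_heq hrest
      injection h3 with hY he
      subst he
      have hpq : edgeList p = edgeList q := by
        have := congrArg List.reverse h2
        simpa using this
      rw [ih q hpq]

variable {A : Type*} [DecidableEq A]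

/-- A DFA step: state `some i` means "so far we read exactly the first `i` letters of `L`";
`none` is a fail state. -/
def step (L : List A) (a : A) :
    Option (Fin (L.length + 1)) → Option (Fin (L.length + 1))
  | none => none
  | some i =>
    if h : (i : ℕ) < L.length then
      if L[(i : ℕ)]'h = a then some ⟨(i : ℕ) + 1, by omega⟩ else none
    else none

/-- Run the DFA on a word. -/
def run (L : List A) : List A → Option (Fin (L.length + 1)) → Option (Fin (L.length + 1))
  | [], s => s
  | a :: l, s => run L l (step L a s)

theorem run_append (L : List A) (l : List A) (a : A) (s) :
    run L (l ++ [a]) s = step L a (run L l s) := by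
  induction l generalizing s with
  | nil => rfl
  | cons b l ih =>
    show run L (l ++ [a]) (step L b s) = _
    rw [ih]
    rfl

theorem run_none (L : List A) (l : List A) : run L l none = none := by
  induction l with
  | nil => rfl
  | cons a l ih => simpa [run, step] using ih

theorem run_self (L : List A) : ∀ (l : List A) (i : Fin (L.length + 1)),
    L.drop i = l → run L l (some i) = some ⟨L.length, Nat.lt_succ_self _⟩ := by
  intro l
  induction l with
  | nil =>
    intro i h
    have hi : (i : ℕ) = L.length := by
      have := List.drop_eq_nil_iff.mp h
      omega
    show some i = _
    simp [Fin.ext_iff, hi]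
  | cons a l ih =>
    intro i h
    have hlt : (i : ℕ) < L.length := by
      by_contra hc
      rw [List.drop_eq_nil_of_le (by omega)] at h
      exact nomatch h
    have hd := List.drop_eq_getElem_cons (l := L) hlt
    rw [hd] at h
    have hget : L[(i : ℕ)]'hlt = a := (List.cons.injEq _ _ _ _ ▸ h).1
    have hdrop : L.drop ((i : ℕ) + 1) = l := (List.cons.injEq _ _ _ _ ▸ h).2
    have hstep : step L a (some i) = some ⟨(i : ℕ) + 1, by omega⟩ := by
      simp [step, hlt, hget]
    show run L l (step L a (some i)) = _
    rw [hstep]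
    exact ih ⟨(i : ℕ) + 1, by omega⟩ hdrop

theorem run_eq_last (L : List A) : ∀ (l : List A) (i j : Fin (L.length + 1)),
    run L l (some i) = some j → L.drop i = l ++ L.drop j := by
  intro l
  induction l with
  | nil =>
    intro i j h
    have : i = j := by simpa [run] using h
    subst this; simp
  | cons a l ih =>
    intro i j h
    replace h : run L l (step L a (some i)) = some j := h
    by_cases hlt : (i : ℕ) < L.length
    · by_cases hget : L[(i : ℕ)]'hlt = a
      · have hstep : step L a (some i) = some ⟨(i : ℕ) + 1, by omega⟩ := by
          simp [step, hlt, hget]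
        rw [hstep] at h
        have hrec := ih ⟨(i : ℕ) + 1, by omega⟩ j h
        rw [List.drop_eq_getElem_cons (l := L) hlt]
        simp only [List.cons_append]
        rw [← hget]
        congr 1
      · have hstep : step L a (some i) = none := by simp [step, hlt, hget]
        rw [hstep, run_none] at h
        exact absurd h (by simp)
    · have hstep : step L a (some i) = none := by simp [step, hlt]
      rw [hstep, run_none] at h
      exact absurd h (by simp)

/-- The DFA accepts exactly `L`. -/
theorem run_eq_iff (L : List A) (l : List A) :
    run L l (some ⟨0, Nat.succ_pos _⟩) = some ⟨L.length, Nat.lt_succ_self _⟩ ↔ l = L := by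
  constructor
  · intro h
    have := run_eq_last L l _ _ h
    simpa using this.symm
  · rintro rfl
    exact run_self _ _ _ (by simp)

/-- An object of `Paths V` from a vertex. -/
def pobj (X : V) : Paths V := X

/-- A morphism of `Paths V` from a path. -/
def toHom {X Y : V} (p : Quiver.Path X Y) : pobj X ⟶ pobj Y := p

/-- The prefunctor into the transition monoid of the DFA for `L`. -/
def mach [DecidableEq (Σ a b : V, a ⟶ b)] (L : List (Σ a b : V, a ⟶ b)) :
    V ⥤q SingleObj (Function.End (Option (Fin (L.length + 1)))) where
  obj _ := SingleObj.star _
  map {a b} e := step L ⟨a, b, e⟩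

theorem lift_mach [DecidableEq (Σ a b : V, a ⟶ b)] (L : List (Σ a b : V, a ⟶ b))
    {X Y : V} (p : Quiver.Path X Y) (s : Option (Fin (L.length + 1))) :
    ((Paths.lift (mach L)).map (toHom p) : Function.End (Option (Fin (L.length + 1)))) s
      = run L (edgeList p) s := by
  induction p with
  | nil => rfl
  | cons p e ih =>
    show step L ⟨_, _, e⟩
      (((Paths.lift (mach L)).map (toHom p) : Function.End (Option (Fin (L.length + 1)))) s) = _
    rw [ih]
    show _ = run L (edgeList p ++ [⟨_, _, e⟩]) s
    rw [run_append]

end RFAux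

/-- The free category (path category) on a quiver is residually finite. -/
theorem residuallyFinite_paths (V : Type*) [Quiver V] :
    ResiduallyFiniteCat (CategoryTheory.Paths V) := by
  intro X Y f g hfg
  classical
  let X' : V := X
  let Y' : V := Y
  let f' : Quiver.Path X' Y' := f
  let g' : Quiver.Path X' Y' := g
  let L := RFAux.edgeList f'
  let S := Option (Fin (L.length + 1))
  haveI : Fintype (Function.End S) := inferInstanceAs (Fintype (S → S))
  haveI : DecidableEq (Function.End S) := inferInstanceAs (DecidableEq (S → S))
  refine ⟨SingleObj (Function.End S), inferInstance, inferInstance,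
    Paths.lift (RFAux.mach L), ?_⟩
  intro h
  have h' : (Paths.lift (RFAux.mach L)).map (RFAux.toHom f')
      = (Paths.lift (RFAux.mach L)).map (RFAux.toHom g') := h
  have h0 : ∀ s : S,
      ((Paths.lift (RFAux.mach L)).map (RFAux.toHom f') : Function.End S) s
      = ((Paths.lift (RFAux.mach L)).map (RFAux.toHom g') : Function.End S) s :=
    fun s => by rw [h']
  have hf := RFAux.lift_mach L f' (some ⟨0, Nat.succ_pos _⟩)
  have hg := RFAux.lift_mach L g' (some ⟨0, Nat.succ_pos _⟩)
  have hfL : RFAux.run L L (some ⟨0, Nat.succ_pos _⟩)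
      = some ⟨L.length, Nat.lt_succ_self _⟩ := (RFAux.run_eq_iff L L).mpr rfl
  have hrun : RFAux.run L (RFAux.edgeList g') (some ⟨0, Nat.succ_pos _⟩)
      = some ⟨L.length, Nat.lt_succ_self _⟩ := by
    rw [← hg, ← h0, hf]
    exact hfL
  have hEq : RFAux.edgeList g' = L := (RFAux.run_eq_iff L _).mp hrun
  exact hfg ((RFAux.edgeList_inj g' f' hEq).symm)
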